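/- arXiv:0903.0573 — 4 statements merged into one kernel-verified Lean document; each statement's English description precedes it below -/
import Mathlib

section
/- Let $\lambda>0$ and $\Re\alpha>0$ with $\alpha\neq 1,3,5,\dots$. For even $n$, the integral $\int_{-1}^1 |t|^{\alpha-1}\,\frac{C_n^{\lambda}(t)}{C_n^{\lambda}(1)}\,\tilde c_{\lambda+1/2}(1-t^2)^{\lambda-1/2}\,dt$ multiplied by $\frac{\sqrt{\pi}\,\Gamma((1-\alpha)/2)}{\Gamma(\lambda+1)\Gamma(\alpha/2)}$ equals $(-1)^{n/2}\,\frac{\Gamma((n+1-\alpha)/2)}{\Gamma(\lambda+(n+1+\alpha)/2)}$; for odd $n$ the integral is $0$. -/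
set_option maxHeartbeats 1000000

open MeasureTheory Real

/-- The Gegenbauer polynomial `C_n^λ`, defined by the standard three-term recurrence. -/
noncomputable def gegen (lam : ℝ) : ℕ → ℝ → ℝ
  | 0, _ => 1
  | 1, x => 2 * lam * x
  | (n+2), x => (2*((n:ℝ)+1+lam)*x * gegen lam (n+1) x
      - ((n:ℝ)+2*lam) * gegen lam n x) / ((n:ℝ)+2)

lemma two_step {P : ℕ → Prop} (h0 : P 0) (h1 : P 1)
    (hs : ∀ n, P n → P (n+1) → P (n+2)) : ∀ n, P n := by
  have H : ∀ n, P n ∧ P (n+1) := by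
    intro n
    induction n with
    | zero => exact ⟨h0, h1⟩
    | succ k ih => exact ⟨ih.2, hs k ih.1 ih.2⟩
  exact fun n => (H n).1

lemma Gamma_inv_rec (z : ℂ) : (Complex.Gamma z)⁻¹ = z * (Complex.Gamma (z+1))⁻¹ := by
  rcases eq_or_ne z 0 with rfl | hz
  · simp
  · rw [Complex.Gamma_add_one z hz, mul_inv, ← mul_assoc, mul_inv_cancel₀ hz, one_mul]

lemma gegen_cont (lam : ℝ) : ∀ n, Continuous (gegen lam n) := by
  apply two_step
  · simpa [gegen] using continuous_const
  · show Continuous fun x => 2 * lam * x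
    fun_prop
  · intro n h1 h2
    show Continuous fun x => (2*((n:ℝ)+1+lam)*x * gegen lam (n+1) x
      - ((n:ℝ)+2*lam) * gegen lam n x) / ((n:ℝ)+2)
    fun_prop

lemma gegen_neg (lam : ℝ) : ∀ n, ∀ x : ℝ, gegen lam n (-x) = (-1)^n * gegen lam n x := by
  apply two_step
  · intro x; simp [gegen]
  · intro x; show 2*lam*(-x) = (-1)^1 * (2*lam*x); ring
  · intro n h1 h2 x
    show (2*((n:ℝ)+1+lam)*(-x) * gegen lam (n+1) (-x)
      - ((n:ℝ)+2*lam) * gegen lam n (-x)) / ((n:ℝ)+2) = (-1)^(n+2) * ((2*((n:ℝ)+1+lam)*x * gegen lam (n+1) x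
      - ((n:ℝ)+2*lam) * gegen lam n x) / ((n:ℝ)+2))
    rw [h1, h2]
    ring

lemma gegen_one_succ (lam : ℝ) : ∀ n : ℕ,
    ((n:ℝ)+1) * gegen lam (n+1) 1 = ((n:ℝ) + 2*lam) * gegen lam n 1 := by
  intro n
  induction n with
  | zero => simp [gegen]
  | succ k ih =>
      have hg : gegen lam (k+1+1) 1 = (2*((k:ℝ)+1+lam)*1 * gegen lam (k+1) 1
        - ((k:ℝ)+2*lam) * gegen lam k 1) / ((k:ℝ)+2) := rfl
      rw [hg]
      push_cast
      have hk : (k:ℝ)+2 ≠ 0 := by positivity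
      field_simp
      nlinarith [ih]

lemma gegen_one_pos (lam : ℝ) (hlam : 0 < lam) : ∀ n, 0 < gegen lam n 1 := by
  intro n
  induction n with
  | zero => simp [gegen]
  | succ k ih =>
      have h := gegen_one_succ lam k
      have hk : (0:ℝ) < (k:ℝ)+1 := by positivity
      nlinarith

lemma integrableOn_aux (lam : ℝ) (hlam : 0 < lam) {s : ℂ} (hs : -1 < s.re)
    {q : ℝ → ℝ} (hq : Continuous q) :
    IntegrableOn (fun t : ℝ => (t:ℂ)^s * (q t : ℂ) * (((1-t^2)^(lam-1/2) : ℝ) : ℂ))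
      (Set.Ioc (0:ℝ) 1) := by
  have hu : 0 < (s+1).re := by simp [Complex.add_re]; linarith
  have hv : 0 < ((lam:ℂ)+1/2).re := by
    simp [Complex.add_re]
    norm_num
    linarith
  have hbeta := Complex.betaIntegral_convergent hu hv
  have hcont : ContinuousOn (fun t : ℝ => ((q t : ℂ) * (((1+t)^(lam-1/2):ℝ):ℂ)))
      (Set.uIcc (0:ℝ) 1) := by
    apply ContinuousOn.mul
    · exact (Complex.continuous_ofReal.comp hq).continuousOn
    · apply Complex.continuous_ofReal.comp_continuousOn
      apply ContinuousOn.rpow_const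
      · fun_prop
      · intro t ht
        left
        simp only [Set.uIcc_of_le (zero_le_one' ℝ), Set.mem_Icc] at ht
        intro h
        linarith [ht.1]
  have h2 := hbeta.mul_continuousOn hcont
  have h3 : IntegrableOn (fun t : ℝ =>
      ((t:ℂ)^(s+1-1) * (1-(t:ℂ))^((lam:ℂ)+1/2-1)) * ((q t:ℂ) * (((1+t)^(lam-1/2):ℝ):ℂ)))
      (Set.Ioc (0:ℝ) 1) :=
    (intervalIntegrable_iff_integrableOn_Ioc_of_le zero_le_one).mp h2
  apply h3.congr_fun ?_ measurableSet_Ioc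
  intro t ht
  obtain ⟨ht0, ht1⟩ := ht
  have h1t : (0:ℝ) ≤ 1 - t := by linarith
  have h1t' : (0:ℝ) ≤ 1 + t := by linarith
  have key : (((1-t^2)^(lam-1/2) : ℝ) : ℂ) = (1-(t:ℂ))^((lam:ℂ)+1/2-1) * (((1+t)^(lam-1/2):ℝ):ℂ) := by
    have hf : (1:ℝ) - t^2 = (1-t)*(1+t) := by ring
    have he : (lam:ℂ)+1/2-1 = (((lam - 1/2 : ℝ)):ℂ) := by push_cast; ring
    rw [hf, Real.mul_rpow h1t h1t', Complex.ofReal_mul, Complex.ofReal_cpow h1t, he]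
    push_cast
    ring
  rw [add_sub_cancel_right] at *
  simp only []
  rw [key]
  ring

lemma sq_image : (fun t : ℝ => t^2) '' Set.Ioo 0 1 = Set.Ioo (0:ℝ) 1 := by
  ext x
  constructor
  · rintro ⟨t, ⟨h0, h1⟩, rfl⟩
    simp only [Set.mem_Ioo]
    constructor
    · positivity
    · nlinarith [mul_pos (by linarith : (0:ℝ) < 1 - t) (by linarith : (0:ℝ) < 1 + t)]
  · rintro ⟨h0, h1⟩
    exact ⟨Real.sqrt x, ⟨Real.sqrt_pos.mpr h0, by
      rw [show (1:ℝ) = Real.sqrt 1 by simp]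
      exact Real.sqrt_lt_sqrt h0.le h1⟩, Real.sq_sqrt h0.le⟩

lemma I0 (lam : ℝ) (hlam : 0 < lam) {s : ℂ} (hs : -1 < s.re) :
    ∫ t in Set.Ioc (0:ℝ) 1, (t:ℂ)^s * (((1-t^2)^(lam-1/2) : ℝ) : ℂ)
      = Complex.Gamma ((s+1)/2) * Complex.Gamma ((lam:ℂ)+1/2)
        / (2 * Complex.Gamma (s/2 + lam + 1)) := by
  have hu : 0 < ((s+1)/2).re := by
    rw [Complex.div_ofNat_re, Complex.add_re]
    simp only [Complex.one_re]
    have : 0 < s.re + 1 := by linarith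
    positivity
  have hv : 0 < ((lam:ℂ)+1/2).re := by
    simp [Complex.add_re]; norm_num; linarith
  have hw : 0 < (s/2 + lam + 1).re := by
    simp only [Complex.add_re, Complex.div_ofNat_re, Complex.one_re, Complex.ofReal_re]
    linarith
  have hG := Complex.Gamma_mul_Gamma_eq_betaIntegral hu hv
  have harg : (s+1)/2 + ((lam:ℂ)+1/2) = s/2 + lam + 1 := by ring
  rw [harg] at hG
  -- substitution
  have hderiv : ∀ x ∈ Set.Ioo (0:ℝ) 1,
      HasDerivWithinAt (fun t : ℝ => t^2) (2*x) (Set.Ioo 0 1) x := by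
    intro x hx
    have h := hasDerivAt_pow 2 x
    norm_num at h
    exact h.hasDerivWithinAt
  have hinj : Set.InjOn (fun t : ℝ => t^2) (Set.Ioo 0 1) := by
    intro a ha b hb h
    simp only at h
    have h2 : (a-b)*(a+b) = 0 := by linear_combination h
    rcases mul_eq_zero.mp h2 with h'|h'
    · linarith
    · linarith [ha.1, hb.1]
  have hsub := MeasureTheory.integral_image_eq_integral_abs_deriv_smul
    measurableSet_Ioo hderiv hinj
    (fun x : ℝ => (x:ℂ)^((s+1)/2-1) * (1-(x:ℂ))^(((lam:ℂ)+1/2)-1))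
  rw [sq_image] at hsub
  have hbeta_eq : Complex.betaIntegral ((s+1)/2) ((lam:ℂ)+1/2)
      = ∫ x in Set.Ioo (0:ℝ) 1, (x:ℂ)^((s+1)/2-1) * (1-(x:ℂ))^(((lam:ℂ)+1/2)-1) := by
    rw [Complex.betaIntegral, intervalIntegral.integral_of_le zero_le_one,
      MeasureTheory.integral_Ioc_eq_integral_Ioo]
  -- simplify RHS of hsub
  have hrhs : (∫ t in Set.Ioo (0:ℝ) 1,
      |2*t| • ((((t^2 : ℝ)):ℂ)^((s+1)/2-1) * (1-(((t^2:ℝ)):ℂ))^(((lam:ℂ)+1/2)-1)))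
      = 2 * ∫ t in Set.Ioo (0:ℝ) 1, (t:ℂ)^s * (((1-t^2)^(lam-1/2) : ℝ) : ℂ) := by
    rw [← MeasureTheory.integral_const_mul]
    apply setIntegral_congr_fun measurableSet_Ioo
    intro t ht
    obtain ⟨ht0, ht1⟩ := ht
    have htne : (t:ℂ) ≠ 0 := by
      simp only [ne_eq, Complex.ofReal_eq_zero]; linarith
    have habs : |2*t| = 2*t := abs_of_pos (by linarith)
    have hsq : (((t^2 : ℝ)):ℂ) = (t:ℂ)^2 := by push_cast; ring
    have hpow : ((t:ℂ)^2)^((s+1)/2-1) = (t:ℂ)^(s-1) := by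
      have harg0 : Complex.arg (t:ℂ) = 0 := Complex.arg_ofReal_of_nonneg ht0.le
      have h2 := Complex.cpow_nat_mul' (x := (t:ℂ)) (n := 2)
        (by rw [harg0]; norm_num; exact Real.pi_pos)
        (by rw [harg0]; norm_num; exact Real.pi_pos.le) ((s+1)/2-1)
      rw [← h2]
      congr 1
      push_cast
      ring
    have hone : (1 - (((t^2:ℝ)):ℂ)) = ((1 - t^2 : ℝ) : ℂ) := by push_cast; ring
    have he : ((lam:ℂ)+1/2)-1 = (((lam - 1/2 : ℝ)):ℂ) := by push_cast; ring
    have hw2 : ((1:ℂ)-(t:ℂ)^2)^(((lam:ℂ)+1/2)-1) = (((1-t^2)^(lam-1/2) : ℝ) : ℂ) := by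
      rw [show ((1:ℂ) - (t:ℂ)^2) = (((1-t^2:ℝ)):ℂ) by push_cast; ring, he,
        ← Complex.ofReal_cpow (by nlinarith)]
    have hts : (t:ℂ) * (t:ℂ)^(s-1) = (t:ℂ)^s := by
      nth_rewrite 1 [← Complex.cpow_one (t:ℂ)]
      rw [← Complex.cpow_add _ _ htne]
      norm_num
    simp only [habs, hsq, hpow, hw2, Complex.real_smul]
    rw [← hts]
    simp only [Complex.ofReal_mul, Complex.ofReal_ofNat]
    ring
  rw [hbeta_eq, hsub, hrhs] at hG
  rw [MeasureTheory.integral_Ioc_eq_integral_Ioo]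
  have hGne : Complex.Gamma (s/2 + lam + 1) ≠ 0 := Complex.Gamma_ne_zero_of_re_pos hw
  have h2ne : (2 : ℂ) * Complex.Gamma (s/2 + lam + 1) ≠ 0 := mul_ne_zero two_ne_zero hGne
  rw [eq_div_iff h2ne, hG]
  ring

lemma F_eq (lam : ℝ) (hlam : 0 < lam) : ∀ n : ℕ, ∀ s : ℂ, -1 < s.re →
    (∫ t in Set.Ioc (0:ℝ) 1,
        (t:ℂ)^s * ((gegen lam n t : ℝ):ℂ) * (((1-t^2)^(lam-1/2) : ℝ) : ℂ))
      = (gegen lam n 1 : ℂ) * ((Real.Gamma (lam + 1/2) : ℝ):ℂ) / 2 *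
        Complex.Gamma ((s+1)/2) * Complex.Gamma (s/2+1) *
        (Complex.Gamma ((s - n)/2 + 1))⁻¹ * (Complex.Gamma ((s + n)/2 + lam + 1))⁻¹ := by
  have hK : Complex.Gamma ((lam:ℂ)+1/2) = ((Real.Gamma (lam + 1/2) : ℝ):ℂ) := by
    rw [show ((lam:ℂ)+1/2) = ((lam + 1/2 : ℝ) : ℂ) by push_cast; ring, Complex.Gamma_ofReal]
  apply two_step
  · -- n = 0
    intro s hs
    have hQ : Complex.Gamma (s/2+1) ≠ 0 := by
      apply Complex.Gamma_ne_zero_of_re_pos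
      simp only [Complex.add_re, Complex.div_ofNat_re, Complex.one_re]
      linarith
    have h1 : Complex.Gamma (s/2+1) * (Complex.Gamma (s/2+1))⁻¹ = 1 := mul_inv_cancel₀ hQ
    simp only [gegen, Complex.ofReal_one, mul_one, one_mul, Nat.cast_zero, sub_zero, add_zero]
    rw [I0 lam hlam hs, hK]
    linear_combination (-(Complex.Gamma ((s+1)/2) * ((Real.Gamma (lam + 1/2) : ℝ):ℂ)
      * (Complex.Gamma (s/2+lam+1))⁻¹ / 2)) * h1
  · -- n = 1
    intro s hs
    have hs1 : -1 < (s+1).re := by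
      simp only [Complex.add_re, Complex.one_re]; linarith
    have hP : Complex.Gamma ((s+1)/2) ≠ 0 := by
      apply Complex.Gamma_ne_zero_of_re_pos
      rw [Complex.div_ofNat_re, Complex.add_re]
      simp only [Complex.one_re]
      linarith
    have h1 : Complex.Gamma ((s+1)/2) * (Complex.Gamma ((s+1)/2))⁻¹ = 1 := mul_inv_cancel₀ hP
    have hcong : ∫ t in Set.Ioc (0:ℝ) 1,
        (t:ℂ)^s * ((gegen lam 1 t : ℝ):ℂ) * (((1-t^2)^(lam-1/2) : ℝ) : ℂ)
        = ∫ t in Set.Ioc (0:ℝ) 1,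
          (2*(lam:ℂ)) * ((t:ℂ)^(s+1) * (((1-t^2)^(lam-1/2) : ℝ) : ℂ)) := by
      apply setIntegral_congr_fun measurableSet_Ioc
      intro t ht
      have htne : (t:ℂ) ≠ 0 := by
        simp only [ne_eq, Complex.ofReal_eq_zero]; exact ne_of_gt ht.1
      have hts : (t:ℂ)^(s+1) = (t:ℂ)^s * (t:ℂ) := by
        rw [Complex.cpow_add _ _ htne, Complex.cpow_one]
      beta_reduce
      rw [hts]
      show (t:ℂ)^s * ((2 * lam * t : ℝ):ℂ) * _ = _
      push_cast
      ring
    rw [hcong, MeasureTheory.integral_const_mul, I0 lam hlam hs1, hK]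
    rw [show (s+1+1)/2 = s/2 + 1 by ring,
      show (s+1)/2 + lam + 1 = (s+1)/2 + lam + 1 from rfl]
    simp only [gegen, Nat.cast_one]
    rw [show (s - 1)/2 + 1 = (s+1)/2 by ring, show (s + 1)/2 + lam + 1 = (s+1)/2 + lam + 1 from rfl]
    push_cast
    linear_combination (-((lam:ℂ) * Complex.Gamma (s/2+1) * ((Real.Gamma (lam + 1/2) : ℝ):ℂ)
      * (Complex.Gamma ((s+1)/2+lam+1))⁻¹)) * h1
  · -- step
    intro n IH0 IH1 s hs
    have hs1 : -1 < (s+1).re := by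
      simp only [Complex.add_re, Complex.one_re]; linarith
    have h1i := IH1 (s+1) hs1
    have h0i := IH0 s hs
    have hint1 := (integrableOn_aux lam hlam hs1 (gegen_cont lam (n+1))).const_mul
      ((2*((n:ℝ)+1+lam)/((n:ℝ)+2) : ℝ) : ℂ)
    have hint0 := (integrableOn_aux lam hlam hs (gegen_cont lam n)).const_mul
      ((((n:ℝ)+2*lam)/((n:ℝ)+2) : ℝ) : ℂ)
    have hcong : ∫ t in Set.Ioc (0:ℝ) 1,
        (t:ℂ)^s * ((gegen lam (n+2) t : ℝ):ℂ) * (((1-t^2)^(lam-1/2) : ℝ) : ℂ)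
        = ∫ t in Set.Ioc (0:ℝ) 1,
          (((2*((n:ℝ)+1+lam)/((n:ℝ)+2) : ℝ) : ℂ) *
            ((t:ℂ)^(s+1) * ((gegen lam (n+1) t : ℝ):ℂ) * (((1-t^2)^(lam-1/2) : ℝ) : ℂ))
          - ((((n:ℝ)+2*lam)/((n:ℝ)+2) : ℝ) : ℂ) *
            ((t:ℂ)^s * ((gegen lam n t : ℝ):ℂ) * (((1-t^2)^(lam-1/2) : ℝ) : ℂ))) := by
      apply setIntegral_congr_fun measurableSet_Ioc
      intro t ht
      have htne : (t:ℂ) ≠ 0 := by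
        simp only [ne_eq, Complex.ofReal_eq_zero]; exact ne_of_gt ht.1
      have hts : (t:ℂ)^(s+1) = (t:ℂ)^s * (t:ℂ) := by
        rw [Complex.cpow_add _ _ htne, Complex.cpow_one]
      have hg : gegen lam (n+2) t = (2*((n:ℝ)+1+lam)*t * gegen lam (n+1) t
        - ((n:ℝ)+2*lam) * gegen lam n t) / ((n:ℝ)+2) := rfl
      have hn2 : ((n:ℝ)+2) ≠ 0 := by positivity
      beta_reduce
      rw [hts, hg]
      have hn2c : ((n:ℂ)+2) ≠ 0 := by
        have h' : ((n:ℂ)+2) = ((n+2:ℕ):ℂ) := by push_cast; ring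
        rw [h']
        exact Nat.cast_ne_zero.mpr (by omega)
      push_cast
      field_simp
    rw [hcong, MeasureTheory.integral_sub hint1 hint0,
      MeasureTheory.integral_const_mul, MeasureTheory.integral_const_mul]
    have hn1c : ((n:ℂ)+1) ≠ 0 := by
      have h' : ((n:ℂ)+1) = ((n+1:ℕ):ℂ) := by push_cast; ring
      rw [h']
      exact Nat.cast_ne_zero.mpr (by omega)
    have hn2c : ((n:ℂ)+2) ≠ 0 := by
      have h' : ((n:ℂ)+2) = ((n+2:ℕ):ℂ) := by push_cast; ring
      rw [h']
      exact Nat.cast_ne_zero.mpr (by omega)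
    have hP : (s+1)/2 ≠ 0 := by
      have hre : 0 < ((s+1)/2).re := by
        rw [Complex.div_ofNat_re, Complex.add_re]
        simp only [Complex.one_re]
        linarith
      intro h
      rw [h] at hre
      simp at hre
    have he1c : ((n:ℂ)+1) * ((gegen lam (n+1) 1 : ℝ):ℂ) = ((n:ℂ)+2*lam) * ((gegen lam n 1 : ℝ):ℂ) := by
      have := gegen_one_succ lam n
      exact_mod_cast congrArg (fun x : ℝ => (x : ℂ)) this
    have he1c' : ((gegen lam (n+1) 1 : ℝ):ℂ) = ((n:ℂ)+2*lam) * ((gegen lam n 1 : ℝ):ℂ) / ((n:ℂ)+1) := by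
      rw [eq_div_iff hn1c]
      linear_combination he1c
    have hg2 : (gegen lam (n+2) 1 : ℝ) = (2*((n:ℝ)+1+lam)*1 * gegen lam (n+1) 1
        - ((n:ℝ)+2*lam) * gegen lam n 1) / ((n:ℝ)+2) := rfl
    push_cast at h1i h0i ⊢
    rw [show (s+1+1)/2 = s/2+1 by ring, Complex.Gamma_add_one ((s+1)/2) hP,
      show (s+1-((n:ℂ)+1))/2 + 1 = (s-(n:ℂ))/2 + 1 by ring,
      show (s+1+((n:ℂ)+1))/2 + lam + 1 = (s+(n:ℂ))/2 + lam + 1 + 1 by ring] at h1i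
    rw [Gamma_inv_rec ((s+(n:ℂ))/2+lam+1)] at h0i
    rw [show (s-((n:ℂ)+2))/2 + 1 = (s-(n:ℂ))/2 by ring,
      show (s+((n:ℂ)+2))/2 + lam + 1 = (s+(n:ℂ))/2 + lam + 1 + 1 by ring,
      Gamma_inv_rec ((s-(n:ℂ))/2), hg2, h1i, h0i]
    push_cast
    linear_combination (((n:ℂ)+1+(lam:ℂ)) * ((Real.Gamma (lam + 1/2) : ℝ):ℂ)
      * Complex.Gamma ((s+1)/2) * Complex.Gamma (s/2+1)
      * (Complex.Gamma ((s-(n:ℂ))/2+1))⁻¹ * (Complex.Gamma ((s+(n:ℂ))/2+(lam:ℂ)+1+1))⁻¹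
      / 2 / ((n:ℂ)+2)) * he1c

lemma key_m (α : ℂ) (hre : 0 < α.re) (hodd : ∀ k : ℕ, α ≠ 2*k+1) : ∀ m : ℕ,
    Complex.Gamma ((1-α)/2) * Complex.Gamma ((α+1)/2) * (Complex.Gamma ((α+1)/2 - m))⁻¹
      = (-1)^m * Complex.Gamma ((1-α)/2 + m) := by
  have hb : Complex.Gamma ((α+1)/2) ≠ 0 := by
    apply Complex.Gamma_ne_zero_of_re_pos
    rw [Complex.div_ofNat_re, Complex.add_re]
    simp only [Complex.one_re]
    linarith
  intro m
  induction m with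
  | zero => simp [mul_assoc, mul_inv_cancel₀ hb]
  | succ k ih =>
      have hzk : (1-α)/2 + k ≠ 0 := by
        intro h
        exact hodd k (by linear_combination -2*h)
      push_cast
      rw [show (α+1)/2 - ((k:ℂ)+1) = ((α+1)/2 - ((k:ℂ)+1)) from rfl,
        Gamma_inv_rec ((α+1)/2 - ((k:ℂ)+1)),
        show (α+1)/2 - ((k:ℂ)+1) + 1 = (α+1)/2 - k by ring,
        show (1-α)/2 + ((k:ℂ)+1) = ((1-α)/2 + k) + 1 by ring,
        Complex.Gamma_add_one _ hzk]
      push_cast at ih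
      linear_combination ((α+1)/2 - ((k:ℂ)+1)) * ih

theorem stmt_1 (lam : ℝ) (hlam : 0 < lam) (α : ℂ) (hre : 0 < α.re)
    (hodd : ∀ k : ℕ, α ≠ 2 * k + 1) (n : ℕ) :
    (Even n →
      (Real.sqrt π * Complex.Gamma ((1 - α)/2) /
          ((Real.Gamma (lam + 1) : ℂ) * Complex.Gamma (α/2))) *
        ∫ t in (-1:ℝ)..1, ((|t| : ℝ) : ℂ) ^ (α - 1) *
          ((gegen lam n t / gegen lam n 1 : ℝ) : ℂ) *
          (((Real.sqrt π)⁻¹ * Real.Gamma (lam + 1) / Real.Gamma (lam + 1/2) *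
              (1 - t^2) ^ (lam - 1/2) : ℝ) : ℂ) =
      (-1 : ℂ) ^ (n / 2) *
        (Complex.Gamma (((n : ℂ) + 1 - α)/2) / Complex.Gamma ((lam : ℂ) + ((n : ℂ) + 1 + α)/2))) ∧
    (Odd n →
      (∫ t in (-1:ℝ)..1, ((|t| : ℝ) : ℂ) ^ (α - 1) *
          ((gegen lam n t / gegen lam n 1 : ℝ) : ℂ) *
          (((Real.sqrt π)⁻¹ * Real.Gamma (lam + 1) / Real.Gamma (lam + 1/2) *
              (1 - t^2) ^ (lam - 1/2) : ℝ) : ℂ)) = 0) := by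
  set cw : ℝ := (Real.sqrt π)⁻¹ * Real.Gamma (lam + 1) / Real.Gamma (lam + 1/2) with hcw
  set f : ℝ → ℂ := fun t => ((|t| : ℝ) : ℂ) ^ (α - 1) *
          ((gegen lam n t / gegen lam n 1 : ℝ) : ℂ) *
          ((cw * (1 - t^2) ^ (lam - 1/2) : ℝ) : ℂ) with hf
  have epos : 0 < gegen lam n 1 := gegen_one_pos lam hlam n
  have ene : ((gegen lam n 1 : ℝ):ℂ) ≠ 0 := by
    simp only [ne_eq, Complex.ofReal_eq_zero]
    exact ne_of_gt epos
  have hs0 : -1 < (α - 1).re := by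
    rw [Complex.sub_re]
    simp only [Complex.one_re]
    linarith
  -- the set-integral form
  set g : ℝ → ℂ := fun t => ((cw:ℝ):ℂ) * (((gegen lam n 1 : ℝ):ℂ))⁻¹ *
      ((t:ℂ)^(α-1) * ((gegen lam n t : ℝ):ℂ) * (((1-t^2)^(lam-1/2) : ℝ) : ℂ)) with hg
  have hgint : IntegrableOn g (Set.Ioc (0:ℝ) 1) :=
    (integrableOn_aux lam hlam hs0 (gegen_cont lam n)).const_mul _
  have hfg : Set.EqOn g f (Set.Ioc (0:ℝ) 1) := by
    intro t ht
    have habs : |t| = t := abs_of_pos ht.1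
    simp only [hg, hf, habs]
    push_cast
    ring
  have hfint : IntegrableOn f (Set.Ioc (0:ℝ) 1) := hgint.congr_fun hfg measurableSet_Ioc
  have hII1 : IntervalIntegrable f volume 0 1 :=
    (intervalIntegrable_iff_integrableOn_Ioc_of_le zero_le_one).mpr hfint
  have hneg : ∀ t : ℝ, f (-t) = (-1:ℂ)^n * f t := by
    intro t
    simp only [hf, abs_neg, neg_sq, gegen_neg lam n t]
    push_cast
    ring
  have hII2 : IntervalIntegrable f volume (-1) 0 := by
    have h1 := ((IntervalIntegrable.iff_comp_neg (by simp)).mp hII1).symm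
    rw [neg_zero] at h1
    have h2 := h1.const_mul ((-1:ℂ)^n)
    have h3 : (fun x => (-1:ℂ)^n * f (-x)) = f := by
      funext x
      rw [hneg x, ← mul_assoc, ← pow_add]
      rw [Even.neg_one_pow ⟨n, rfl⟩, one_mul]
    rwa [h3] at h2
  have hflip : ∫ t in (-1:ℝ)..0, f t = (-1:ℂ)^n * ∫ t in (0:ℝ)..1, f t := by
    have h := intervalIntegral.integral_comp_neg (a := (0:ℝ)) (b := 1) f
    rw [neg_zero] at h
    rw [← h]
    simp_rw [hneg]
    rw [intervalIntegral.integral_const_mul]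
  have hT : (∫ t in (-1:ℝ)..1, f t) = ((-1:ℂ)^n + 1) * ∫ t in (0:ℝ)..1, f t := by
    rw [← intervalIntegral.integral_add_adjacent_intervals hII2 hII1, hflip]
    ring
  have hI01 : (∫ t in (0:ℝ)..1, f t) = ((cw:ℝ):ℂ) * (((gegen lam n 1 : ℝ):ℂ))⁻¹ *
      (∫ t in Set.Ioc (0:ℝ) 1,
        (t:ℂ)^(α-1) * ((gegen lam n t : ℝ):ℂ) * (((1-t^2)^(lam-1/2) : ℝ) : ℂ)) := by
    rw [intervalIntegral.integral_of_le zero_le_one,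
      setIntegral_congr_fun measurableSet_Ioc hfg.symm]
    simp only [hg]
    rw [MeasureTheory.integral_const_mul]
  constructor
  · -- even case
    rintro ⟨m, rfl⟩
    have hmm : (m + m) / 2 = m := by omega
    have heven : ((-1:ℂ)^(m+m) + 1) = 2 := by
      rw [Even.neg_one_pow ⟨m, rfl⟩]; norm_num
    rw [hT, heven, hI01, F_eq lam hlam (m+m) (α-1) hs0, hmm]
    push_cast
    rw [show (α-1+1)/2 = α/2 by ring,
      show (α-1)/2+1 = (α+1)/2 by ring,
      show (α-1-((m:ℂ)+(m:ℂ)))/2+1 = (α+1)/2 - (m:ℂ) by ring,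
      show (α-1+((m:ℂ)+(m:ℂ)))/2+(lam:ℂ)+1 = (lam:ℂ) + ((m:ℂ)+(m:ℂ)+1+α)/2 by ring,
      show ((m:ℂ)+(m:ℂ)+1-α)/2 = (1-α)/2 + (m:ℂ) by ring]
    have hkey := key_m α hre hodd m
    have hA : ((Real.sqrt π : ℝ):ℂ) ≠ 0 := by
      simp only [ne_eq, Complex.ofReal_eq_zero]
      positivity
    have hB : ((Real.Gamma (lam+1) : ℝ):ℂ) ≠ 0 := by
      simp only [ne_eq, Complex.ofReal_eq_zero]
      exact ne_of_gt (Real.Gamma_pos_of_pos (by linarith))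
    have hKne : ((Real.Gamma (lam+1/2) : ℝ):ℂ) ≠ 0 := by
      simp only [ne_eq, Complex.ofReal_eq_zero]
      exact ne_of_gt (Real.Gamma_pos_of_pos (by linarith))
    have hG2 : Complex.Gamma (α/2) ≠ 0 := by
      apply Complex.Gamma_ne_zero_of_re_pos
      rw [Complex.div_ofNat_re]
      linarith
    trans (Complex.Gamma ((1-α)/2) * Complex.Gamma ((α+1)/2) *
        (Complex.Gamma ((α+1)/2 - (m:ℂ)))⁻¹ * (Complex.Gamma ((lam:ℂ) + ((m:ℂ)+(m:ℂ)+1+α)/2))⁻¹)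
    · rw [hcw]
      push_cast
      have h1 : ((Real.sqrt π : ℝ):ℂ) * ((Real.sqrt π : ℝ):ℂ)⁻¹ = 1 := mul_inv_cancel₀ hA
      have h2 : ((Real.Gamma (lam+1) : ℝ):ℂ) * ((Real.Gamma (lam+1) : ℝ):ℂ)⁻¹ = 1 :=
        mul_inv_cancel₀ hB
      have h3 : ((Real.Gamma (lam+1/2) : ℝ):ℂ) * ((Real.Gamma (lam+1/2) : ℝ):ℂ)⁻¹ = 1 :=
        mul_inv_cancel₀ hKne
      have h4 : ((gegen lam (m+m) 1 : ℝ):ℂ) * ((gegen lam (m+m) 1 : ℝ):ℂ)⁻¹ = 1 :=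
        mul_inv_cancel₀ ene
      have h5 : Complex.Gamma (α/2) * (Complex.Gamma (α/2))⁻¹ = 1 := mul_inv_cancel₀ hG2
      set c : ℂ := Complex.Gamma ((1-α)/2) * Complex.Gamma ((α+1)/2) *
        (Complex.Gamma ((α+1)/2 - (m:ℂ)))⁻¹ *
        (Complex.Gamma ((lam:ℂ)+((m:ℂ)+(m:ℂ)+1+α)/2))⁻¹ with hc
      set u1 : ℂ := ((Real.sqrt π : ℝ):ℂ) * ((Real.sqrt π : ℝ):ℂ)⁻¹ with hu1
      set u2 : ℂ := ((Real.Gamma (lam+1) : ℝ):ℂ) * ((Real.Gamma (lam+1) : ℝ):ℂ)⁻¹ with hu2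
      set u3 : ℂ := ((Real.Gamma (lam+1/2) : ℝ):ℂ) * ((Real.Gamma (lam+1/2) : ℝ):ℂ)⁻¹ with hu3
      set u4 : ℂ := ((gegen lam (m+m) 1 : ℝ):ℂ) * ((gegen lam (m+m) 1 : ℝ):ℂ)⁻¹ with hu4
      set u5 : ℂ := Complex.Gamma (α/2) * (Complex.Gamma (α/2))⁻¹ with hu5
      linear_combination (c * u2*u3*u4*u5) * h1 + (c*u3*u4*u5) * h2 + (c*u4*u5) * h3
        + (c*u5) * h4 + c * h5
    · rw [hkey, div_eq_mul_inv]
      ring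
  · -- odd case
    intro hoddn
    rw [hT, Odd.neg_one_pow hoddn]
    ring
end

section
/- Let $\lambda>0$, $\alpha\neq 1,3,5,\dots$, $r$ a nonnegative integer, and $n$ an even nonnegative integer. Define $b_{n,\beta}=(-1)^{n/2}\Gamma((n+1-\beta)/2)/\Gamma(\lambda+(n+1+\beta)/2)$ and $\mu_n=n(n+2\lambda)$. Then $$\Big(4^{-r}\prod_{j=1}^{r}\big[\mu_n+(2\lambda-2r+2j+\alpha-1)(2r-2j+1-\alpha)\big]\Big)\cdot b_{n,2r-2\lambda-\alpha}\cdot b_{n,\alpha}=1,$$ provided $2r-2\lambda-\alpha\neq 1,3,5,\dots$ (for $r=0$ the empty product is $1$). -/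
open MeasureTheory Real Finset

private lemma gshift (s : ℂ) (h : ∀ m : ℕ, s + m ≠ 0) :
    ∀ r : ℕ, Complex.Gamma (s + r) = (∏ i ∈ Finset.range r, (s + i)) * Complex.Gamma s := by
  intro r
  induction r with
  | zero => simp
  | succ r ih =>
    have hs : s + r ≠ 0 := h r
    have : s + (r + 1 : ℕ) = (s + r) + 1 := by push_cast; ring
    rw [this, Complex.Gamma_add_one _ hs, ih, Finset.prod_range_succ]
    ring

theorem stmt_2 (lam : ℝ) (hlam : 0 < lam) (α : ℂ)
    (hodd : ∀ k : ℕ, α ≠ 2 * k + 1) (r : ℕ) (n : ℕ) (hn : Even n)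
    (hodd' : ∀ k : ℕ, 2 * (r : ℂ) - 2 * lam - α ≠ 2 * k + 1)
    (b : ℂ → ℂ)
    (hb : ∀ β : ℂ, b β = (-1 : ℂ) ^ (n / 2) *
      Complex.Gamma (((n : ℂ) + 1 - β)/2) / Complex.Gamma ((lam : ℂ) + ((n : ℂ) + 1 + β)/2)) :
    ((4 : ℂ) ^ (-(r : ℤ)) *
      ∏ j ∈ Finset.Icc 1 r,
        (((n : ℂ) * ((n : ℂ) + 2 * lam)) +
          (2 * (lam : ℂ) - 2 * r + 2 * j + α - 1) * (2 * (r : ℂ) - 2 * j + 1 - α))) *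
      b (2 * (r : ℂ) - 2 * lam - α) * b α = 1 := by
  obtain ⟨t, ht⟩ := hn
  have hnC : (n : ℂ) = (t : ℂ) + t := by exact_mod_cast ht
  set A : ℂ := ((n : ℂ) + 1 - α) / 2 with hA
  set B : ℂ := (lam : ℂ) + ((n : ℂ) + 1 + α) / 2 with hB
  have hAne : ∀ m : ℕ, A + m ≠ 0 := by
    intro m hm
    rw [hA] at hm
    exact hodd (t + m) (by push_cast; linear_combination (-2 : ℂ) * hm + hnC)
  have hBne : ∀ m : ℕ, (B - r) + m ≠ 0 := by
    intro m hm
    rw [hB] at hm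
    exact hodd' (t + m) (by push_cast; linear_combination (-2 : ℂ) * hm + hnC)
  have hAneg : ∀ m : ℕ, A ≠ -m := fun m h => hAne m (by rw [h]; ring)
  have hBneg : ∀ m : ℕ, B - r ≠ -m := fun m h => hBne m (by rw [h]; ring)
  have hGA : Complex.Gamma A ≠ 0 := Complex.Gamma_ne_zero hAneg
  have hGB : Complex.Gamma (B - r) ≠ 0 := Complex.Gamma_ne_zero hBneg
  have hPA : (∏ i ∈ Finset.range r, (A + i)) ≠ 0 :=
    Finset.prod_ne_zero_iff.2 fun i _ => hAne i
  have hPB : (∏ i ∈ Finset.range r, ((B - r) + i)) ≠ 0 :=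
    Finset.prod_ne_zero_iff.2 fun i _ => hBne i
  -- rewrite the product
  have hprod : (∏ j ∈ Finset.Icc 1 r,
        (((n : ℂ) * ((n : ℂ) + 2 * lam)) +
          (2 * (lam : ℂ) - 2 * r + 2 * j + α - 1) * (2 * (r : ℂ) - 2 * j + 1 - α)))
      = (4 : ℂ) ^ r * (∏ i ∈ Finset.range r, (A + i)) *
        (∏ i ∈ Finset.range r, ((B - r) + i)) := by
    rw [← Finset.Ico_add_one_right_eq_Icc, Finset.prod_Ico_eq_prod_range]
    norm_num
    have step : ∀ i ∈ Finset.range r,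
        (((n : ℂ) * ((n : ℂ) + 2 * lam)) +
          (2 * (lam : ℂ) - 2 * r + 2 * (1 + (i : ℂ)) + α - 1) *
            (2 * (r : ℂ) - 2 * (1 + (i : ℂ)) + 1 - α))
        = 4 * (A + (↑(r - 1 - i) : ℕ)) * ((B - r) + i) := by
      intro i hi
      have hi0 : i < r := Finset.mem_range.1 hi
      have hi' : 1 + i ≤ r := by omega
      have hc : ((r - 1 - i : ℕ) : ℂ) = (r : ℂ) - 1 - i := by
        rw [Nat.sub_sub]
        push_cast [Nat.cast_sub hi']
        ring
      rw [hc, hA, hB]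
      push_cast
      ring
    rw [Finset.prod_congr rfl step]
    simp only [Finset.prod_mul_distrib, Finset.prod_const, Finset.card_range]
    rw [Finset.prod_range_reflect (fun i => A + (i : ℂ)) r]
  -- Gamma identities
  have hGA' : Complex.Gamma (A + r) = (∏ i ∈ Finset.range r, (A + i)) * Complex.Gamma A :=
    gshift A hAne r
  have hGB' : Complex.Gamma B = (∏ i ∈ Finset.range r, ((B - r) + i)) * Complex.Gamma (B - r) := by
    have := gshift (B - r) hBne r
    rw [sub_add_cancel] at this
    exact this
  -- rewrite b's
  have hb1 : b (2 * (r : ℂ) - 2 * lam - α) =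
      (-1 : ℂ) ^ (n / 2) * Complex.Gamma (B - r) / Complex.Gamma (A + r) := by
    rw [hb]
    have e1 : ((n : ℂ) + 1 - (2 * (r : ℂ) - 2 * lam - α)) / 2 = B - r := by rw [hB]; ring
    have e2 : (lam : ℂ) + ((n : ℂ) + 1 + (2 * (r : ℂ) - 2 * lam - α)) / 2 = A + r := by
      rw [hA]; ring
    rw [e1, e2]
  have hb2 : b α = (-1 : ℂ) ^ (n / 2) * Complex.Gamma A / Complex.Gamma B := by
    rw [hb, hA, hB]
  have hGAr : Complex.Gamma (A + r) ≠ 0 := by rw [hGA']; exact mul_ne_zero hPA hGA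
  have hGBfull : Complex.Gamma B ≠ 0 := by rw [hGB']; exact mul_ne_zero hPB hGB
  have ht2 : n / 2 = t := by omega
  have hsign : ((-1 : ℂ)) ^ (n / 2) * ((-1 : ℂ)) ^ (n / 2) = 1 := by
    rw [ht2, ← pow_add]
    exact Even.neg_one_pow ⟨t, rfl⟩
  have h4 : (4 : ℂ) ^ (-(r : ℤ)) = ((4 : ℂ) ^ r)⁻¹ := by
    rw [zpow_neg, zpow_natCast]
  rw [hprod, hb1, hb2, h4, hGA', hGB']
  have h4r : ((4 : ℂ) ^ r) ≠ 0 := pow_ne_zero _ (by norm_num)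
  field_simp
  linear_combination hsign
end

section
/- Let $d\ge 1$, $\kappa_1>0$, and consider on $\mathbb{S}^d\subset\mathbb{R}^{d+1}$ the weight $h_\kappa(x)=|x_1|^{\kappa_1}$ and the operator $V_\kappa f(x)=\tilde c_{\kappa_1}\int_{-1}^1 f(x_1 t,\tilde x)(1+t)(1-t^2)^{\kappa_1-1}dt$ where $x=(x_1,\tilde x)$. Then for $\phi$ integrable on $[-1,1]$ against $(1-t^2)^{\kappa_1-1}dt$ and points $x,y$ with $x_1y_1\neq 0$, $$V_\kappa[\phi(\langle x,\cdot\rangle)](y)=\frac{\tilde c_{\kappa_1}}{|x_1y_1|^{2\kappa_1}}\int_{\langle\tilde x,\tilde y\rangle-|x_1y_1|}^{\langle\tilde x,\tilde y\rangle+|x_1y_1|}\phi(\tau)\,|\langle x,y\rangle-\tau|^{\kappa_1-1}\,|\langle x\sigma,y\rangle-\tau|^{\kappa_1}\,d\tau,$$ where $x\sigma=(-x_1,\tilde x)$. -/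
open MeasureTheory Real

theorem stmt_8 (d : ℕ) (hd : 1 ≤ d) (κ : ℝ) (hκ : 0 < κ)
    (x₁ y₁ : ℝ) (xt yt : EuclideanSpace ℝ (Fin d))
    (hx : x₁^2 + ‖xt‖^2 = 1) (hy : y₁^2 + ‖yt‖^2 = 1) (hxy : x₁ * y₁ ≠ 0)
    (φ : ℝ → ℝ)
    (hφ : IntervalIntegrable (fun t => |φ t| * (1 - t^2) ^ (κ - 1)) volume (-1) 1) :
    ((Real.sqrt π)⁻¹ * Real.Gamma (κ + 1/2) / Real.Gamma κ) *
        ∫ t in (-1:ℝ)..1, φ (x₁ * y₁ * t + inner ℝ xt yt) * (1 + t) * (1 - t^2) ^ (κ - 1) =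
      ((Real.sqrt π)⁻¹ * Real.Gamma (κ + 1/2) / Real.Gamma κ) / |x₁ * y₁| ^ (2 * κ) *
        ∫ τ in (inner ℝ xt yt - |x₁ * y₁| : ℝ)..(inner ℝ xt yt + |x₁ * y₁| : ℝ),
          φ τ * |(x₁ * y₁ + inner ℝ xt yt) - τ| ^ (κ - 1) *
            |(-(x₁ * y₁) + inner ℝ xt yt) - τ| ^ κ := by
  set a : ℝ := x₁ * y₁ with hadef
  set b : ℝ := inner ℝ xt yt with hbdef
  have ha : a ≠ 0 := hxy
  have ha' : (0:ℝ) < |a| := abs_pos.mpr ha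
  set g : ℝ → ℝ := fun τ => φ τ * |(a + b) - τ| ^ (κ - 1) * |(-a + b) - τ| ^ κ with hg
  -- pointwise identity on [-1,1]
  have key : ∀ t ∈ Set.uIcc (-1:ℝ) 1,
      φ (a * t + b) * (1 + t) * (1 - t^2) ^ (κ - 1)
        = |a| ^ (1 - 2*κ) * g (a * t + b) := by
    intro t ht
    rw [Set.uIcc_of_le (by norm_num)] at ht
    obtain ⟨h1t, ht1⟩ := ht
    have h1 : (0:ℝ) ≤ 1 - t := by linarith
    have h2 : (0:ℝ) ≤ 1 + t := by linarith
    have e1 : (a + b) - (a * t + b) = a * (1 - t) := by ring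
    have e2 : (-a + b) - (a * t + b) = -(a * (1 + t)) := by ring
    have e3 : (1 - t^2 : ℝ) = (1 - t) * (1 + t) := by ring
    have habs : |a| ^ (1 - 2*κ) * (|a| ^ (κ - 1) * |a| ^ κ) = 1 := by
      rw [← Real.rpow_add ha', ← Real.rpow_add ha',
        show (1 - 2*κ) + (κ - 1 + κ) = 0 by ring, Real.rpow_zero]
    simp only [hg, e1, e2, abs_neg, abs_mul, e3]
    rw [abs_of_nonneg h1, abs_of_nonneg h2, Real.mul_rpow h1 h2,
        Real.mul_rpow (abs_nonneg a) h1, Real.mul_rpow (abs_nonneg a) h2]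
    rcases eq_or_lt_of_le h2 with h0 | hpos
    · rw [← h0, Real.zero_rpow (ne_of_gt hκ)]
      ring
    · have : (1 + t) ^ κ = (1 + t) ^ (κ - 1) * (1 + t) := by
        rw [← Real.rpow_add_one (ne_of_gt hpos)]
        ring_nf
      rw [this]
      linear_combination (-(φ (a*t+b)) * (1-t)^(κ-1) * ((1+t)^(κ-1)) * (1+t)) * habs
  have hcongr : (∫ t in (-1:ℝ)..1, φ (a * t + b) * (1 + t) * (1 - t^2) ^ (κ - 1))
      = ∫ t in (-1:ℝ)..1, |a| ^ (1 - 2*κ) * g (a * t + b) :=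
    intervalIntegral.integral_congr key
  have hconst : (∫ t in (-1:ℝ)..1, |a| ^ (1 - 2*κ) * g (a * t + b))
      = |a| ^ (1 - 2*κ) * ∫ t in (-1:ℝ)..1, g (a * t + b) :=
    intervalIntegral.integral_const_mul _ _
  have comp : (∫ t in (-1:ℝ)..1, g (a * t + b))
      = a⁻¹ • ∫ τ in a * (-1) + b..a * 1 + b, g τ :=
    intervalIntegral.integral_comp_mul_add g ha b
  have flip : a⁻¹ • (∫ τ in a * (-1) + b..a * 1 + b, g τ)
      = |a|⁻¹ * ∫ τ in b - |a|..b + |a|, g τ := by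
    rcases abs_cases a with ⟨h, h0⟩ | ⟨h, h0⟩
    · rw [h, show a * (-1) + b = b - a by ring, show a * 1 + b = b + a by ring]
      simp [smul_eq_mul]
    · rw [h, show a * (-1) + b = b + -a by ring, show a * 1 + b = b - -a by ring,
        intervalIntegral.integral_symm]
      simp [smul_eq_mul]
  have hpow : |a| ^ (1 - 2*κ) * |a|⁻¹ = (|a| ^ (2*κ))⁻¹ := by
    rw [← Real.rpow_neg_one |a|, ← Real.rpow_add ha',
      ← Real.rpow_neg (abs_nonneg a) (2*κ)]
    ring_nf
  rw [hcongr, hconst, comp, flip]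
  have : (∫ τ in b - |a|..b + |a|,
      φ τ * |(a + b) - τ| ^ (κ - 1) * |(-a + b) - τ| ^ κ)
      = ∫ τ in b - |a|..b + |a|, g τ := rfl
  rw [this, div_eq_mul_inv _ (|a| ^ (2*κ)), ← hpow]
  ring
end

section
/- Let $\lambda$ be a positive integer and $n$ an even nonnegative integer. Then with $b_n=(-1)^{n/2}\frac{\Gamma(\lambda+1/2)}{\Gamma(1/2)}\frac{\Gamma((n+1)/2)}{\Gamma(\lambda+(n+1)/2)}$ and $\mu_n=n(n+2\lambda)$, $$\frac{\pi}{\Gamma(\lambda+1/2)^2}\cdot 4^{-\lambda}\prod_{j=1}^{\lambda}\big[\mu_n+(2j-1)(2\lambda-2j+1)\big]\cdot b_n^2=1.$$ -/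
open MeasureTheory Real Finset

private lemma gamma_add_nat' (x : ℝ) (hx : 0 < x) (m : ℕ) :
    Real.Gamma ((m : ℝ) + x) = Real.Gamma x * ∏ i ∈ Finset.range m, (x + i) := by
  induction m with
  | zero => simp
  | succ m ih =>
      have hne : (m : ℝ) + x ≠ 0 := by positivity
      have : ((m + 1 : ℕ) : ℝ) + x = ((m : ℝ) + x) + 1 := by push_cast; ring
      rw [this, Real.Gamma_add_one hne, ih, Finset.prod_range_succ]
      ring

private lemma prod_reflect' (lam n : ℕ) :
    ∏ j ∈ Finset.Icc 1 lam, ((n : ℝ) + 2 * (lam : ℝ) - 2 * j + 1) =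
    ∏ j ∈ Finset.Icc 1 lam, ((n : ℝ) + 2 * j - 1) := by
  refine Finset.prod_nbij' (fun j => lam + 1 - j) (fun j => lam + 1 - j) ?_ ?_ ?_ ?_ ?_
  · intro a ha; simp only [Finset.mem_Icc] at *; omega
  · intro a ha; simp only [Finset.mem_Icc] at *; omega
  · intro a ha; simp only [Finset.mem_Icc] at ha; omega
  · intro a ha; simp only [Finset.mem_Icc] at ha; omega
  · intro a ha
    simp only [Finset.mem_Icc] at ha
    have h : ((lam + 1 - a : ℕ) : ℝ) = (lam : ℝ) + 1 - a := by
      have h2 : a ≤ lam + 1 := by omega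
      push_cast [Nat.cast_sub h2]; ring
    rw [h]; ring

private lemma prod_shift' (lam n : ℕ) :
    ∏ j ∈ Finset.Icc 1 lam, ((n : ℝ) + 2 * j - 1) =
    ∏ i ∈ Finset.range lam, ((n : ℝ) + 2 * i + 1) := by
  refine Finset.prod_nbij' (fun j => j - 1) (fun i => i + 1) ?_ ?_ ?_ ?_ ?_
  · intro a ha; simp only [Finset.mem_Icc, Finset.mem_range] at *; omega
  · intro a ha; simp only [Finset.mem_Icc, Finset.mem_range] at *; omega
  · intro a ha; simp only [Finset.mem_Icc] at ha; omega
  · intro a ha; simp only [Finset.mem_range] at ha; omega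
  · intro a ha
    simp only [Finset.mem_Icc] at ha
    have h : ((a - 1 : ℕ) : ℝ) = (a : ℝ) - 1 := by
      push_cast [Nat.cast_sub ha.1]; ring
    rw [h]; ring

theorem stmt_18 (lam : ℕ) (hlam : 0 < lam) (n : ℕ) (hn : Even n)
    (b : ℝ)
    (hb : b = (-1 : ℝ) ^ (n / 2) * (Real.Gamma ((lam : ℝ) + 1/2) / Real.Gamma (1/2)) *
      (Real.Gamma (((n : ℝ) + 1) / 2) / Real.Gamma ((lam : ℝ) + ((n : ℝ) + 1) / 2))) :
    (π / Real.Gamma ((lam : ℝ) + 1/2) ^ 2) *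
      ((4 : ℝ) ^ (-(lam : ℤ)) *
        ∏ j ∈ Finset.Icc 1 lam,
          ((n : ℝ) * ((n : ℝ) + 2 * lam) + (2 * (j : ℝ) - 1) * (2 * (lam : ℝ) - 2 * j + 1))) *
      b ^ 2 = 1 := by
  set P : ℝ := ∏ j ∈ Finset.Icc 1 lam, ((n : ℝ) + 2 * j - 1) with hP
  have hprod : ∏ j ∈ Finset.Icc 1 lam,
      ((n : ℝ) * ((n : ℝ) + 2 * lam) + (2 * (j : ℝ) - 1) * (2 * (lam : ℝ) - 2 * j + 1)) = P ^ 2 := by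
    have h1 : ∀ j ∈ Finset.Icc 1 lam,
        (n : ℝ) * ((n : ℝ) + 2 * lam) + (2 * (j : ℝ) - 1) * (2 * (lam : ℝ) - 2 * j + 1)
          = ((n : ℝ) + 2 * j - 1) * ((n : ℝ) + 2 * (lam : ℝ) - 2 * j + 1) := by
      intro j _; ring
    rw [Finset.prod_congr rfl h1, Finset.prod_mul_distrib, prod_reflect' lam n, hP, sq]
  have hx : (0 : ℝ) < ((n : ℝ) + 1) / 2 := by positivity
  have hG : Real.Gamma ((lam : ℝ) + ((n : ℝ) + 1) / 2)
      = Real.Gamma (((n : ℝ) + 1) / 2) * ∏ i ∈ Finset.range lam, (((n : ℝ) + 1) / 2 + i) :=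
    gamma_add_nat' _ hx lam
  have hQ : ∏ i ∈ Finset.range lam, (((n : ℝ) + 1) / 2 + i) = (1 / 2) ^ lam * P := by
    rw [hP, prod_shift' lam n,
      show ((1 : ℝ) / 2) ^ lam = ∏ _i ∈ Finset.range lam, ((1 : ℝ) / 2) by simp,
      ← Finset.prod_mul_distrib]
    refine Finset.prod_congr rfl fun i _ => ?_
    ring
  have hPpos : 0 < P := by
    refine Finset.prod_pos fun j hj => ?_
    simp only [Finset.mem_Icc] at hj
    have : (1 : ℝ) ≤ (j : ℝ) := by exact_mod_cast hj.1
    nlinarith [Nat.cast_nonneg (α := ℝ) n]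
  have hGx : 0 < Real.Gamma (((n : ℝ) + 1) / 2) := Real.Gamma_pos_of_pos hx
  have hGl : 0 < Real.Gamma ((lam : ℝ) + 1/2) := Real.Gamma_pos_of_pos (by positivity)
  have hsq : Real.sqrt π ^ 2 = π := Real.sq_sqrt Real.pi_pos.le
  have hneg : ((-1 : ℝ) ^ (n / 2)) ^ 2 = 1 := by
    rw [← pow_mul, mul_comm, pow_mul]; norm_num
  rw [hprod, hb, hG, hQ, Real.Gamma_one_half_eq, zpow_neg, zpow_natCast,
    show (4 : ℝ) = 2 * 2 by norm_num, mul_pow, one_div, inv_pow,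
    mul_pow, mul_pow, hneg, one_mul, div_pow, div_pow, hsq]
  have h2 : (0 : ℝ) < (2 : ℝ) ^ lam := by positivity
  field_simp
end
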